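/- Let A : X^n → T be a (possibly randomized) algorithm selecting a test statistic, and suppose A has β-approximate max-information at most k over product distributions, i.e. I^β_{∞,P}(A,n) ≤ k. Then the function γ(α) = max((α − β)/2^k, 0) is a valid p-value correction function for A: for every significance level α ∈ [0,1] and every distribution P over X, the probability (over X ~ P^n and the coins of A) that the selected statistic φ_i = A(X) satisfies both P ∈ H_0^(i) and p_i(φ_i(X)) ≤ γ(α) is at most α. -/

import Mathlib

open scoped ENNReal

/-- The probability that a sample from the probability mass function `μ` lands in `S`. -/
noncomputable def prob {α : Type*} (μ : PMF α) (S : Set α) : ℝ :=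
  (μ.toOuterMeasure S).toReal

/-- The independent coupling of two distributions: a pair whose components are independent
with the given marginal distributions. -/
noncomputable def indepPair {α β : Type*} (p : PMF α) (q : PMF β) : PMF (α × β) :=
  p.bind fun a => q.map fun b => (a, b)

/-- `MaxInfoLe μ b k` : the `b`-approximate max-information of the joint distribution `μ`
is at most `k` (measured in bits):  for every event `O` with `Pr[(X,Z) ∈ O] > b`,
`Pr[(X,Z) ∈ O] - b ≤ 2^k · Pr[X ⊗ Z ∈ O]`. -/
def MaxInfoLe {α β : Type*} (μ : PMF (α × β)) (b k : ℝ) : Prop :=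
  ∀ O : Set (α × β), b < prob μ O →
    prob μ O - b ≤ 2 ^ k * prob (indepPair (μ.map Prod.fst) (μ.map Prod.snd)) O

/-- The `n`-fold product (i.i.d.) distribution `P^n` on datasets of size `n`. -/
noncomputable def iidPMF {X : Type*} (P : PMF X) : (n : ℕ) → PMF (Fin n → X)
  | 0 => PMF.pure (fun i => i.elim0)
  | n + 1 => P.bind fun a => (iidPMF P n).map fun x => Fin.cons a x

/-- The joint distribution of `(X, A(X))` where `X ∼ μ` and `A` is a randomized algorithm. -/
noncomputable def jointPMF {D Y : Type*} (μ : PMF D) (A : D → PMF Y) : PMF (D × Y) :=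
  μ.bind fun x => (A x).map fun y => (x, y)

/- ### Auxiliary lemmas -/

lemma toOM_le_one {α : Type*} (p : PMF α) (S : Set α) : p.toOuterMeasure S ≤ 1 := by
  calc p.toOuterMeasure S ≤ p.toOuterMeasure Set.univ :=
        p.toOuterMeasure_mono (by intro x _; trivial)
    _ = 1 := by rw [PMF.toOuterMeasure_apply]; simpa using p.tsum_coe

lemma toOM_ne_top {α : Type*} (p : PMF α) (S : Set α) : p.toOuterMeasure S ≠ ⊤ :=
  ne_top_of_le_ne_top ENNReal.one_ne_top (toOM_le_one p S)

lemma prob_mono_of_le {α : Type*} (p : PMF α) {S : Set α} {e : ℝ≥0∞}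
    (h : p.toOuterMeasure S ≤ e) : prob p S ≤ e.toReal ∨ e = ⊤ := by
  by_cases he : e = ⊤
  · exact Or.inr he
  · exact Or.inl (ENNReal.toReal_mono he h)

/-- The key p-value fact: the probability that a sample has p-value at most `γ` is at
most `γ`. -/
lemma pvalue_bound {D : Type*} (p : PMF D) (f : D → ℝ) (γ : ℝ) (hγ : 0 ≤ γ) :
    p.toOuterMeasure {x | prob p {y | f x ≤ f y} ≤ γ} ≤ ENNReal.ofReal γ := by
  set S : Set D := {x | prob p {y | f x ≤ f y} ≤ γ} with hS
  by_contra hcon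
  push_neg at hcon
  rw [PMF.toOuterMeasure_apply, ENNReal.tsum_eq_iSup_sum] at hcon
  rw [lt_iSup_iff] at hcon
  obtain ⟨s, hs⟩ := hcon
  -- restrict to elements of S
  have hsum : ∑ x ∈ s, S.indicator p x = ∑ x ∈ s.filter (· ∈ S), p x := by
    rw [Finset.sum_filter]
    refine Finset.sum_congr rfl fun x _ => ?_
    by_cases hx : x ∈ S <;> simp [Set.indicator_apply, hx]
  rw [hsum] at hs
  have hne : (s.filter (· ∈ S)).Nonempty := by
    rcases Finset.eq_empty_or_nonempty (s.filter (· ∈ S)) with h | h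
    · rw [h] at hs; simp at hs
    · exact h
  obtain ⟨x0, hx0mem, hx0min⟩ := Finset.exists_min_image (s.filter (· ∈ S)) f hne
  have hx0S : x0 ∈ S := (Finset.mem_filter.mp hx0mem).2
  -- the whole filtered set is contained in {y | f x0 ≤ f y}
  have hsub : ∀ x ∈ s.filter (· ∈ S), x ∈ {y | f x0 ≤ f y} := fun x hx => hx0min x hx
  have hle : ∑ x ∈ s.filter (· ∈ S), p x ≤ p.toOuterMeasure {y | f x0 ≤ f y} := by
    rw [PMF.toOuterMeasure_apply]
    calc ∑ x ∈ s.filter (· ∈ S), p x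
        = ∑ x ∈ s.filter (· ∈ S), {y | f x0 ≤ f y}.indicator p x := by
          refine Finset.sum_congr rfl fun x hx => ?_
          rw [Set.indicator_of_mem (hsub x hx)]
      _ ≤ ∑' x, {y | f x0 ≤ f y}.indicator p x := ENNReal.sum_le_tsum _
  have hgt : ENNReal.ofReal γ < p.toOuterMeasure {y | f x0 ≤ f y} := lt_of_lt_of_le hs hle
  have : γ < prob p {y | f x0 ≤ f y} := by
    rw [prob, ← ENNReal.ofReal_lt_iff_lt_toReal hγ (toOM_ne_top _ _)]
    exact hgt
  exact absurd hx0S (by simp [hS]; linarith)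

lemma joint_fst {D Y : Type*} (μ : PMF D) (A : D → PMF Y) :
    (jointPMF μ A).map Prod.fst = μ := by
  rw [jointPMF, PMF.map_bind]
  have : ∀ x : D, ((A x).map fun y => (x, y)).map Prod.fst = PMF.pure x := by
    intro x
    rw [PMF.map_comp]
    have : (Prod.fst ∘ fun y : Y => (x, y)) = Function.const Y x := rfl
    rw [this, PMF.map_const]
  simp_rw [this]
  exact PMF.bind_pure μ

theorem stmt_0 {X T : Type*} {n : ℕ} (A : (Fin n → X) → PMF T)
    (φ : T → (Fin n → X) → ℝ) (H0 : T → Set (PMF X)) (b k : ℝ)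
    (hmi : ∀ P : PMF X, MaxInfoLe (jointPMF (iidPMF P n) A) b k)
    (α : ℝ) (hα0 : 0 ≤ α) (hα1 : α ≤ 1) (P : PMF X) :
    prob (jointPMF (iidPMF P n) A)
      {p : (Fin n → X) × T |
        P ∈ H0 p.2 ∧
        prob (iidPMF P n) {x | φ p.2 p.1 ≤ φ p.2 x} ≤ max ((α - b) / 2 ^ k) 0} ≤ α := by
  set p : PMF (Fin n → X) := iidPMF P n with hp
  set γ : ℝ := max ((α - b) / 2 ^ k) 0 with hγdef
  have hγ0 : 0 ≤ γ := le_max_right _ _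
  set O : Set ((Fin n → X) × T) :=
    {z : (Fin n → X) × T | P ∈ H0 z.2 ∧ prob p {x | φ z.2 z.1 ≤ φ z.2 x} ≤ γ} with hO
  have h2k : (0:ℝ) < 2 ^ k := Real.rpow_pos_of_pos two_pos k
  -- bound on the independent-pair probability of O
  set q : PMF T := (jointPMF p A).map Prod.snd with hq
  have hindep : (indepPair ((jointPMF p A).map Prod.fst) q).toOuterMeasure O
      ≤ ENNReal.ofReal γ := by
    rw [joint_fst]
    rw [indepPair, PMF.toOuterMeasure_bind_apply]
    have hterm : ∀ a : Fin n → X,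
        p a * (q.map fun b => (a, b)).toOuterMeasure O
          = ∑' t, p a * O.indicator (fun z => q z.2) (a, t) := by
      intro a
      rw [PMF.toOuterMeasure_map_apply, PMF.toOuterMeasure_apply, ENNReal.tsum_mul_left]
      refine congrArg (p a * ·) (tsum_congr fun t => ?_)
      by_cases ht : (a, t) ∈ O <;> simp [Set.indicator_apply, ht]
    calc ∑' a, p a * (q.map fun b => (a, b)).toOuterMeasure O
        = ∑' (a) (t), p a * O.indicator (fun z => q z.2) (a, t) := tsum_congr hterm
      _ = ∑' (t) (a), p a * O.indicator (fun z => q z.2) (a, t) := ENNReal.tsum_comm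
      _ = ∑' t : T, q t * p.toOuterMeasure {a | (a, t) ∈ O} := by
          refine tsum_congr fun t => ?_
          rw [PMF.toOuterMeasure_apply, ← ENNReal.tsum_mul_left]
          refine tsum_congr fun a => ?_
          by_cases ha : (a, t) ∈ O <;>
            simp [Set.indicator_apply, ha, mul_comm]
      _ ≤ ∑' t : T, q t * ENNReal.ofReal γ := by
          refine ENNReal.tsum_le_tsum fun t => mul_le_mul_right ?_ _
          calc p.toOuterMeasure {a | (a, t) ∈ O}
              ≤ p.toOuterMeasure {x | prob p {y | φ t x ≤ φ t y} ≤ γ} := by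
                refine p.toOuterMeasure_mono ?_
                intro a ha
                exact ha.1.2
            _ ≤ ENNReal.ofReal γ := pvalue_bound p (φ t) γ hγ0
      _ = ENNReal.ofReal γ := by rw [ENNReal.tsum_mul_right, q.tsum_coe, one_mul]
  have hindepR : prob (indepPair ((jointPMF p A).map Prod.fst) q) O ≤ γ := by
    have := ENNReal.toReal_mono (by simp) hindep
    rwa [ENNReal.toReal_ofReal hγ0] at this
  by_cases hab : b ≤ α
  · -- here γ = (α - b) / 2 ^ k
    have hγeq : γ = (α - b) / 2 ^ k := by
      rw [hγdef, max_eq_left]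
      exact div_nonneg (by linarith) (le_of_lt h2k)
    by_cases hbig : b < prob (jointPMF p A) O
    · have hmx := hmi P O hbig
      have : prob (jointPMF p A) O - b ≤ 2 ^ k * γ :=
        hmx.trans (by nlinarith [hindepR])
      rw [hγeq, mul_div_cancel₀ _ (ne_of_gt h2k)] at this
      linarith
    · push_neg at hbig; linarith
  · -- here γ = 0 and the set O is p-null
    push_neg at hab
    have hγeq : γ = 0 := by
      rw [hγdef, max_eq_right]
      apply div_nonpos_of_nonpos_of_nonneg <;> [linarith; positivity]
    have hOzero : (jointPMF p A).toOuterMeasure O = 0 := by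
      rw [jointPMF, PMF.toOuterMeasure_bind_apply]
      refine ENNReal.summable.tsum_eq_zero_iff.mpr fun x => ?_
      by_cases hx : p x = 0
      · simp [hx]
      · suffices h : ((A x).map fun y => (x, y)).toOuterMeasure O = 0 by simp [h]
        rw [PMF.toOuterMeasure_map_apply]
        rw [PMF.toOuterMeasure_apply]
        refine ENNReal.summable.tsum_eq_zero_iff.mpr fun t => ?_
        rw [Set.indicator_apply_eq_zero]
        intro ht
        exfalso
        have hle : p x ≤ p.toOuterMeasure {y | φ t x ≤ φ t y} := by
          rw [← p.toOuterMeasure_apply_singleton]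
          refine p.toOuterMeasure_mono ?_
          intro y hy
          have hyx : y = x := hy.1
          subst hyx
          simp
        have hpos : 0 < prob p {y | φ t x ≤ φ t y} := by
          rw [prob]
          have : (0:ℝ≥0∞) < p.toOuterMeasure {y | φ t x ≤ φ t y} :=
            lt_of_lt_of_le (pos_iff_ne_zero.mpr hx) hle
          exact ENNReal.toReal_pos (ne_of_gt this) (toOM_ne_top _ _)
        have := ht.2
        rw [hγeq] at this
        linarith
    rw [prob, hOzero]
    simpa using hα0
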